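/- Let (S,*) be an adequate partial semigroup, let r be an idempotent in J(S) ⊆ δS, and let (C_n)_{n=1}^∞ be a sequence of members of r. Then there exist functions m* : P_f(ℱ) → ℕ, α ∈ ∏_{F∈P_f(ℱ)} S^{m*(F)+1}, and 𝒯 ∈ ∏_{F∈P_f(ℱ)} 𝒥_{m*(F)} such that: (1) if F, G ∈ P_f(ℱ) with G ⊊ F, then 𝒯(G)(m*(G)) < 𝒯(F)(1); and (2) whenever m ∈ ℕ, G_1 ⊊ G_2 ⊊ ... ⊊ G_s are members of P_f(ℱ) with |G_1| = m, and f_i ∈ G_i for each i ∈ {1,...,s}, then ∏_{i=1}^{s} ((∏_{j=1}^{m*(G_i)} α(G_i)(j)*f_i(𝒯(G_i)(j)))*α(G_i)(m*(G_i)+1)) ∈ C_m. -/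

import Mathlib

/-- A partial semigroup: `mul` is partially defined (`none` = undefined), and
associativity holds in the strong sense: either side is defined iff the other is,
and then they agree. -/
structure PartialSemigroup (S : Type*) where
  mul : S → S → Option S
  assoc : ∀ a b c : S,
    (mul a b).bind (fun x => mul x c) = (mul b c).bind (fun y => mul a y)

namespace PartialSemigroup

variable {S : Type*} (P : PartialSemigroup S)

/-- φ(a) = {t : a*t is defined}. -/
def phi (a : S) : Set S := {t | (P.mul a t).isSome}

/-- σ(H) = ⋂_{s ∈ H} φ(s). -/
def sigma (H : Set S) : Set S := ⋂ s ∈ H, P.phi s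

/-- a⁻¹A = {t ∈ φ(a) : a*t ∈ A}. -/
def invImg (a : S) (A : Set S) : Set S :=
  {t | ∃ v, P.mul a t = some v ∧ v ∈ A}

/-- An adequate partial semigroup: σ(H) ≠ ∅ for every finite nonempty H. -/
def Adequate : Prop :=
  ∀ H : Finset S, H.Nonempty → (P.sigma ↑H).Nonempty

/-- δS: ultrafilters containing every φ(x). -/
def mem_delta (q : Ultrafilter S) : Prop := ∀ x : S, P.phi x ∈ q

/-- Product of a nonempty list, associated to the left; `none` if empty or undefined. -/
def listProd : List S → Option S
  | [] => none
  | a :: l => l.foldl (fun acc b => acc.bind (fun x => P.mul x b)) (some a)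

/-- ∏_{t ∈ H} f(t) in increasing order of indices. -/
def finProd (f : ℕ → S) (H : Finset ℕ) : Option S :=
  P.listProd ((H.sort (· ≤ ·)).map f)

/-- Product of a list of partially defined elements. -/
def optProd : List (Option S) → Option S
  | [] => none
  | o :: l => l.foldl (fun acc b => acc.bind (fun x => b.bind (fun y => P.mul x y))) o

/-- An adequate sequence. -/
def AdequateSeq (f : ℕ → S) : Prop :=
  (∀ H : Finset ℕ, H.Nonempty → (P.finProd f H).isSome) ∧
  (∀ F : Finset S, F.Nonempty → ∃ m : ℕ,
    ∀ H : Finset ℕ, H.Nonempty → (∀ n ∈ H, m ≤ n) →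
      ∀ v, P.finProd f H = some v → v ∈ P.sigma ↑F)

/-- The interleaved product (∏_{i=1}^m a(i)*f(t(i)))*a(m+1). -/
def jProd {m : ℕ} (a : Fin (m + 1) → S) (t : Fin m → ℕ) (f : ℕ → S) : Option S :=
  P.listProd
    ((((List.finRange m).map (fun i => [a i.castSucc, f (t i)])).flatten) ++ [a (Fin.last m)])

/-- J-sets. -/
def IsJSet (A : Set S) : Prop :=
  ∀ F : Finset (ℕ → S), F.Nonempty → (∀ f ∈ F, P.AdequateSeq f) →
    ∀ L : Finset S, L.Nonempty →
      ∃ m : ℕ, 0 < m ∧ ∃ a : Fin (m + 1) → S, ∃ t : Fin m → ℕ, StrictMono t ∧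
        ∀ f ∈ F, ∃ v, P.jProd a t f = some v ∧ v ∈ A ∩ P.sigma ↑L

end PartialSemigroup

namespace PartialSemigroup
variable {S : Type*} (P : PartialSemigroup S)

/-- A syndetic subset of a partial semigroup. -/
def Syndetic (A : Set S) : Prop :=
  ∃ H : Finset S, H.Nonempty ∧ P.sigma ↑H ⊆ ⋃ t ∈ H, P.invImg t A

end PartialSemigroup

namespace PartialSemigroup
variable {S : Type*} (P : PartialSemigroup S)

/-- `I` is a (two-sided) ideal of `δS` (with respect to the operation `star`). -/
def IsIdeal (star : {q : Ultrafilter S // P.mem_delta q} → {q : Ultrafilter S // P.mem_delta q} →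
      {q : Ultrafilter S // P.mem_delta q})
    (I : Set {q : Ultrafilter S // P.mem_delta q}) : Prop :=
  I.Nonempty ∧ ∀ p ∈ I, ∀ q, star p q ∈ I ∧ star q p ∈ I

/-- `K` is the smallest (two-sided) ideal of `δS`. -/
def IsSmallestIdeal (star : {q : Ultrafilter S // P.mem_delta q} →
      {q : Ultrafilter S // P.mem_delta q} → {q : Ultrafilter S // P.mem_delta q})
    (K : Set {q : Ultrafilter S // P.mem_delta q}) : Prop :=
  P.IsIdeal star K ∧ ∀ I, P.IsIdeal star I → K ⊆ I

end PartialSemigroup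

namespace CSTAux

open PartialSemigroup

variable {S : Type*}

/-- `A⋆ = {a ∈ A : a⁻¹A ∈ r}`. -/
def star (P : PartialSemigroup S) (r : Ultrafilter S) (A : Set S) : Set S :=
  A ∩ {a | P.invImg a A ∈ r}

lemma star_subset (P : PartialSemigroup S) (r : Ultrafilter S) (A : Set S) :
    star P r A ⊆ A := Set.inter_subset_left

lemma star_mem (P : PartialSemigroup S) (r : Ultrafilter S)
    (hidem : ∀ A : Set S, A ∈ r ↔ {a : S | P.invImg a A ∈ r} ∈ r)
    {A : Set S} (hA : A ∈ r) : star P r A ∈ r :=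
  Filter.inter_mem hA ((hidem A).mp hA)

lemma star_star (P : PartialSemigroup S) (r : Ultrafilter S)
    (hidem : ∀ A : Set S, A ∈ r ↔ {a : S | P.invImg a A ∈ r} ∈ r)
    {A : Set S} (hA : A ∈ r) {x : S} (hx : x ∈ star P r A) :
    P.invImg x (star P r A) ∈ r := by
  have h1 : P.invImg x A ∈ r := hx.2
  have h2 : {a : S | P.invImg a (P.invImg x A) ∈ r} ∈ r := (hidem _).mp h1
  refine Filter.mem_of_superset (Filter.inter_mem h1 h2) ?_
  rintro t ⟨⟨v, hxt, hvA⟩, ht2⟩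
  refine ⟨v, hxt, hvA, ?_⟩
  refine Filter.mem_of_superset ht2 ?_
  rintro u ⟨w, htu, z, hxw, hzA⟩
  have hassoc := P.assoc x t u
  rw [hxt, htu] at hassoc
  simp only [Option.bind_some] at hassoc
  exact ⟨z, hassoc.trans hxw, hzA⟩

/-- abbreviation for the index type. -/
abbrev GT (P : PartialSemigroup S) :=
  {G : Finset (ℕ → S) // G.Nonempty ∧ ∀ f ∈ G, P.AdequateSeq f}

/-- The data attached to each stage. -/
def Out (S : Type*) : Type _ := Σ m : ℕ, (Fin (m + 1) → S) × (Fin m → ℕ)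

/-- Product along a chain. -/
def chainProd (P : PartialSemigroup S) (b : GT P → Out S) {s : ℕ}
    (G : Fin (s + 1) → GT P) (f : Fin (s + 1) → ℕ → S) : Option S :=
  P.optProd ((List.finRange (s + 1)).map
    (fun i => P.jProd (b (G i)).2.1 (b (G i)).2.2 (f i)))

/-- `y` is good for stage `F`: every chain product strictly below `F` multiplies into
the corresponding `star (C m)`. -/
def Good (P : PartialSemigroup S) (r : Ultrafilter S) (C : ℕ → Set S)
    (b : GT P → Out S) (F : GT P) (y : S) : Prop :=
  ∀ (s : ℕ) (G : Fin (s + 1) → GT P) (f : Fin (s + 1) → ℕ → S),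
    (∀ i j, i < j → (G i).1 ⊂ (G j).1) → (∀ i, f i ∈ (G i).1) →
    (G (Fin.last s)).1 ⊂ F.1 →
    ∀ x, chainProd P b G f = some x →
      ∃ w, P.mul x y = some w ∧ w ∈ star P r (C (G 0).1.card)

def ASet (P : PartialSemigroup S) (r : Ultrafilter S) (C : ℕ → Set S)
    (b : GT P → Out S) (F : GT P) : Set S :=
  star P r (C F.1.card) ∩ {y | Good P r C b F y}

/-- The specification at one stage (relative to the earlier stages `b`). -/
def LocalSpec (P : PartialSemigroup S) (r : Ultrafilter S) (C : ℕ → Set S)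
    (b : GT P → Out S) (F : GT P) (d : Out S) : Prop :=
  StrictMono d.2.2 ∧
  (∀ G : GT P, G.1 ⊂ F.1 → ∀ i j, (b G).2.2 i < d.2.2 j) ∧
  (∀ f ∈ F.1, ∃ v, P.jProd d.2.1 d.2.2 f = some v ∧ v ∈ ASet P r C b F)

lemma chain_top {P : PartialSemigroup S} {s : ℕ} {G : Fin (s + 1) → GT P}
    (hinc : ∀ i j, i < j → (G i).1 ⊂ (G j).1) {F : GT P}
    (hlast : (G (Fin.last s)).1 ⊂ F.1) (i : Fin (s + 1)) : (G i).1 ⊂ F.1 := by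
  rcases eq_or_lt_of_le (Fin.le_last i) with h | h
  · rw [h]; exact hlast
  · exact (hinc i _ h).trans hlast

lemma chainProd_congr {P : PartialSemigroup S} {b₁ b₂ : GT P → Out S} {s : ℕ}
    {G : Fin (s + 1) → GT P} {f : Fin (s + 1) → ℕ → S}
    (h : ∀ i, b₁ (G i) = b₂ (G i)) :
    chainProd P b₁ G f = chainProd P b₂ G f := by
  unfold chainProd
  congr 1
  refine List.map_congr_left ?_
  intro i _
  rw [h i]

lemma good_congr {P : PartialSemigroup S} {r : Ultrafilter S} {C : ℕ → Set S}
    {b₁ b₂ : GT P → Out S} {F : GT P}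
    (h : ∀ G : GT P, G.1 ⊂ F.1 → b₁ G = b₂ G) {y : S}
    (hy : Good P r C b₁ F y) : Good P r C b₂ F y := by
  intro s G f hinc hf hlast x hx
  refine hy s G f hinc hf hlast x ?_
  rw [chainProd_congr (fun i => h (G i) (chain_top hinc hlast i))]
  exact hx

lemma localSpec_congr {P : PartialSemigroup S} {r : Ultrafilter S} {C : ℕ → Set S}
    {b₁ b₂ : GT P → Out S} {F : GT P}
    (h : ∀ G : GT P, G.1 ⊂ F.1 → b₁ G = b₂ G) {d : Out S}
    (hd : LocalSpec P r C b₁ F d) : LocalSpec P r C b₂ F d := by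
  obtain ⟨h1, h2, h3⟩ := hd
  refine ⟨h1, ?_, ?_⟩
  · intro G hG
    rw [← h G hG]
    exact h2 G hG
  · intro f hf
    obtain ⟨v, hv1, hv2, hv3⟩ := h3 f hf
    exact ⟨v, hv1, hv2, good_congr h hv3⟩

noncomputable def junk (s₀ : S) : Out S := ⟨0, fun _ => s₀, Fin.elim0⟩

/-- Extend a partially defined family to a total one. -/
noncomputable def ext {P : PartialSemigroup S} (s₀ : S) (F : GT P)
    (prev : ∀ G : GT P, G.1.card < F.1.card → Out S) : GT P → Out S :=
  fun G => if h : G.1.card < F.1.card then prev G h else junk s₀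

noncomputable def bldStep (P : PartialSemigroup S) (r : Ultrafilter S) (C : ℕ → Set S)
    (s₀ : S) (F : GT P) (prev : ∀ G : GT P, G.1.card < F.1.card → Out S) : Out S :=
  letI := Classical.dec (∃ d, LocalSpec P r C (ext s₀ F prev) F d)
  if h : ∃ d, LocalSpec P r C (ext s₀ F prev) F d then h.choose else junk s₀

noncomputable def bld (P : PartialSemigroup S) (r : Ultrafilter S) (C : ℕ → Set S)
    (s₀ : S) : GT P → Out S :=
  WellFounded.fix (InvImage.wf (fun G : GT P => G.1.card) Nat.lt_wfRel.wf)
    (fun F prev => bldStep P r C s₀ F prev)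

lemma bld_eq (P : PartialSemigroup S) (r : Ultrafilter S) (C : ℕ → Set S)
    (s₀ : S) (F : GT P) :
    bld P r C s₀ F = bldStep P r C s₀ F (fun G _ => bld P r C s₀ G) :=
  WellFounded.fix_eq _ _ _

/-- An `optProd` over a `snoc`-list. -/
lemma optProd_append_singleton (P : PartialSemigroup S) (l : List (Option S))
    (hl : l ≠ []) (o : Option S) :
    P.optProd (l ++ [o]) = (P.optProd l).bind (fun x => o.bind (fun y => P.mul x y)) := by
  cases l with
  | nil => exact absurd rfl hl
  | cons a l' =>
    have hdef : ∀ (c : Option S) (l : List (Option S)), P.optProd (c :: l)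
        = l.foldl (fun acc b => acc.bind fun x => b.bind fun y => P.mul x y) c :=
      fun _ _ => rfl
    rw [List.cons_append, hdef, hdef, List.foldl_append]
    rfl

lemma finRange_snoc (n : ℕ) :
    List.finRange (n + 1) = (List.finRange n).map Fin.castSucc ++ [Fin.last n] := by
  induction n with
  | zero => rfl
  | succ n ih =>
    conv_lhs => rw [List.finRange_succ, ih]
    conv_rhs => rw [List.finRange_succ]
    simp only [List.map_append, List.map_map, List.map_cons, List.map_nil, List.cons_append,
      Fin.castSucc_zero, Fin.succ_last, Function.comp_def, Fin.succ_castSucc]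

lemma chainProd_succ (P : PartialSemigroup S) (b : GT P → Out S) {s : ℕ}
    (G : Fin (s + 2) → GT P) (f : Fin (s + 2) → ℕ → S) :
    chainProd P b G f
      = (chainProd P b (fun i => G i.castSucc) (fun i => f i.castSucc)).bind
        (fun x => (P.jProd (b (G (Fin.last (s + 1)))).2.1 (b (G (Fin.last (s + 1)))).2.2
            (f (Fin.last (s + 1)))).bind (fun y => P.mul x y)) := by
  unfold chainProd
  rw [finRange_snoc (s + 1), List.map_append, List.map_map, List.map_cons, List.map_nil,
    optProd_append_singleton P _ (by simp) _]
  rfl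

lemma chainProd_single (P : PartialSemigroup S) (b : GT P → Out S)
    (G : Fin 1 → GT P) (f : Fin 1 → ℕ → S) :
    chainProd P b G f = P.jProd (b (G 0)).2.1 (b (G 0)).2.2 (f 0) := rfl

/-- Key chain lemma: products along chains all of whose stages satisfy the
local specification are defined and land in the appropriate `star (C m)`. -/
lemma chain_prod_good (P : PartialSemigroup S) (r : Ultrafilter S) (C : ℕ → Set S)
    (b : GT P → Out S) :
    ∀ (s : ℕ) (G : Fin (s + 1) → GT P) (f : Fin (s + 1) → ℕ → S),
    (∀ i, LocalSpec P r C b (G i) (b (G i))) →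
    (∀ i j, i < j → (G i).1 ⊂ (G j).1) → (∀ i, f i ∈ (G i).1) →
    ∃ x, chainProd P b G f = some x ∧ x ∈ star P r (C (G 0).1.card) := by
  intro s
  induction s with
  | zero =>
    intro G f hspec hinc hf
    obtain ⟨v, hv1, hv2, _⟩ := (hspec 0).2.2 (f 0) (hf 0)
    exact ⟨v, by rw [chainProd_single]; exact hv1, hv2⟩
  | succ s ih =>
    intro G f hspec hinc hf
    obtain ⟨x, hx, hxstar⟩ := ih (fun i => G i.castSucc) (fun i => f i.castSucc)
      (fun i => hspec i.castSucc)
      (fun i j hij => hinc _ _ (by simpa [Fin.castSucc_lt_castSucc_iff] using hij))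
      (fun i => hf i.castSucc)
    obtain ⟨v, hv1, hv2, hv3⟩ := (hspec (Fin.last (s + 1))).2.2 (f (Fin.last (s + 1)))
      (hf (Fin.last (s + 1)))
    have hgood := hv3 s (fun i => G i.castSucc) (fun i => f i.castSucc)
      (fun i j hij => hinc _ _ (by simpa [Fin.castSucc_lt_castSucc_iff] using hij))
      (fun i => hf i.castSucc)
      (hinc (Fin.last s).castSucc (Fin.last (s + 1)) (Fin.castSucc_lt_last _))
      x hx
    obtain ⟨w, hw1, hw2⟩ := hgood
    refine ⟨w, ?_, ?_⟩
    · rw [chainProd_succ, hx, hv1]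
      simpa using hw1
    · simpa [Fin.castSucc_zero] using hw2

lemma chain_card_bound {P : PartialSemigroup S} {s : ℕ} {G : Fin (s + 1) → GT P}
    (hinc : ∀ i j, i < j → (G i).1 ⊂ (G j).1) {F : GT P}
    (htop : (G (Fin.last s)).1 ⊂ F.1) : s < F.1.card := by
  have key : ∀ k : ℕ, ∀ hk : k < s + 1, k < (G ⟨k, hk⟩).1.card := by
    intro k
    induction k with
    | zero =>
      intro hk
      exact Finset.card_pos.mpr (G ⟨0, hk⟩).2.1
    | succ k ihk =>
      intro hk
      have h1 : k < s + 1 := Nat.lt_of_succ_lt hk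
      have h2 := ihk h1
      have hlt : (G ⟨k, h1⟩).1.card < (G ⟨k + 1, hk⟩).1.card :=
        Finset.card_lt_card (hinc _ _ (by simp [Fin.lt_def]))
      omega
  have h1 := key s (Nat.lt_succ_self s)
  have h2 : (G (Fin.last s)).1.card < F.1.card := Finset.card_lt_card htop
  have h3 : (⟨s, Nat.lt_succ_self s⟩ : Fin (s + 1)) = Fin.last s := rfl
  rw [h3] at h1
  omega

/-- Shifting an adequate sequence by `k` yields an adequate sequence. -/
lemma sort_image_add (H : Finset ℕ) (k : ℕ) :
    (H.image (· + k)).sort (· ≤ ·) = (H.sort (· ≤ ·)).map (· + k) := by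
  have hinj : Function.Injective (fun n : ℕ => n + k) := fun a b h => by
    simp only [Nat.add_right_cancel_iff] at h
    exact h
  refine (fun hp hs => List.Perm.eq_of_pairwise' (Finset.pairwise_sort _ _) hs hp) ?_ ?_
  · rw [← Multiset.coe_eq_coe, Finset.sort_eq, Finset.image_val_of_injOn hinj.injOn]
    have : ((H.sort (· ≤ ·)).map (· + k) : Multiset ℕ)
        = Multiset.map (· + k) ((H.sort (· ≤ ·)) : Multiset ℕ) := rfl
    rw [this, Finset.sort_eq]
  · refine List.Pairwise.map _ ?_ (Finset.pairwise_sort H (· ≤ ·))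
    intro a b hab
    omega

lemma finProd_shift (P : PartialSemigroup S) (f : ℕ → S) (k : ℕ) (H : Finset ℕ) :
    P.finProd (fun n => f (n + k)) H = P.finProd f (H.image (· + k)) := by
  unfold PartialSemigroup.finProd
  rw [sort_image_add, List.map_map]
  rfl

lemma shift_adequate (P : PartialSemigroup S) (k : ℕ) (f : ℕ → S)
    (hf : P.AdequateSeq f) : P.AdequateSeq (fun n => f (n + k)) := by
  constructor
  · intro H hH
    rw [finProd_shift]
    exact hf.1 _ (hH.image _)
  · intro F hF
    obtain ⟨m, hm⟩ := hf.2 F hF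
    refine ⟨m, ?_⟩
    intro H hH hmem v hv
    rw [finProd_shift] at hv
    refine hm _ (hH.image _) ?_ v hv
    intro n hn
    obtain ⟨n', hn', rfl⟩ := Finset.mem_image.mp hn
    have := hmem n' hn'
    omega

lemma exists_spec (P : PartialSemigroup S) (r : Ultrafilter S) (C : ℕ → Set S)
    (hC : ∀ n, C n ∈ r)
    (hidem : ∀ A : Set S, A ∈ r ↔ {a : S | P.invImg a A ∈ r} ∈ r)
    (hrJ : ∀ A : Set S, A ∈ r → P.IsJSet A)
    (s₀ : S) (F : GT P)
    (IH : ∀ G : GT P, G.1.card < F.1.card →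
      LocalSpec P r C (bld P r C s₀) G (bld P r C s₀ G)) :
    ∃ d, LocalSpec P r C (bld P r C s₀) F d := by
  classical
  set b := bld P r C s₀ with hb
  -- the `Good` part is a member of `r`
  have hGood : {y | Good P r C b F y} ∈ r := by
    set n := F.1.card with hn
    let I := Σ sv : Fin n, (Fin (sv.1 + 1) → {g : Finset (ℕ → S) // g ∈ F.1.powerset})
      × (Fin (sv.1 + 1) → {x : ℕ → S // x ∈ F.1})
    let Sset : I → Set S := fun idx =>
      {y | ∀ (G : Fin (idx.1.1 + 1) → GT P) (f : Fin (idx.1.1 + 1) → ℕ → S),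
        (∀ i, (G i).1 = (idx.2.1 i).1 ∧ f i = (idx.2.2 i).1) →
        (∀ i j, i < j → (G i).1 ⊂ (G j).1) → (∀ i, f i ∈ (G i).1) →
        (G (Fin.last idx.1.1)).1 ⊂ F.1 →
        ∀ x, chainProd P b G f = some x →
          ∃ w, P.mul x y = some w ∧ w ∈ star P r (C (G 0).1.card)}
    have hmem : ∀ idx, Sset idx ∈ r := by
      intro idx
      by_cases h : ∃ (G : Fin (idx.1.1 + 1) → GT P) (f : Fin (idx.1.1 + 1) → ℕ → S),
        (∀ i, (G i).1 = (idx.2.1 i).1 ∧ f i = (idx.2.2 i).1) ∧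
        (∀ i j, i < j → (G i).1 ⊂ (G j).1) ∧ (∀ i, f i ∈ (G i).1) ∧
        (G (Fin.last idx.1.1)).1 ⊂ F.1
      · obtain ⟨G, f, hmatch, hinc, hfm, htop⟩ := h
        have huniq : ∀ (G' : Fin (idx.1.1 + 1) → GT P) (f' : Fin (idx.1.1 + 1) → ℕ → S),
            (∀ i, (G' i).1 = (idx.2.1 i).1 ∧ f' i = (idx.2.2 i).1) → G' = G ∧ f' = f := by
          intro G' f' hm'
          constructor
          · funext i; exact Subtype.ext (((hm' i).1).trans ((hmatch i).1).symm)
          · funext i; exact ((hm' i).2).trans ((hmatch i).2).symm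
        have hspec : ∀ i, LocalSpec P r C b (G i) (b (G i)) := fun i =>
          IH (G i) (Finset.card_lt_card (chain_top hinc htop i))
        obtain ⟨x, hx, hxstar⟩ := chain_prod_good P r C b idx.1.1 G f hspec hinc hfm
        have hB : P.invImg x (star P r (C (G 0).1.card)) ∈ r :=
          star_star P r hidem (hC _) hxstar
        refine Filter.mem_of_superset hB ?_
        rintro y ⟨w, hmul, hw⟩
        intro G' f' hm' hinc' hf' htop' x' hx'
        obtain ⟨hG', hf''⟩ := huniq G' f' hm'
        subst hG'; subst hf''
        rw [hx] at hx'
        obtain rfl : x = x' := by injection hx'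
        exact ⟨w, hmul, hw⟩
      · refine Filter.mem_of_superset Filter.univ_mem ?_
        intro y _ G f hm hinc hf htop x hx
        exact absurd ⟨G, f, hm, hinc, hf, htop⟩ h
    have hsub : (⋂ idx, Sset idx) ⊆ {y | Good P r C b F y} := by
      intro y hy s G f hinc hf htop x hx
      have hslt : s < n := chain_card_bound hinc htop
      exact Set.mem_iInter.mp hy
        ⟨⟨s, hslt⟩, fun i => ⟨(G i).1, Finset.mem_powerset.mpr (chain_top hinc htop i).subset⟩,
          fun i => ⟨f i, (chain_top hinc htop i).subset (hf i)⟩⟩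
        G f (fun i => ⟨rfl, rfl⟩) hinc hf htop x hx
    exact Filter.mem_of_superset (Filter.iInter_mem.mpr hmem) hsub
  have hA : ASet P r C b F ∈ r := Filter.inter_mem (star_mem P r hidem (hC _)) hGood
  -- the bound `k`
  let Nf : Finset (ℕ → S) → ℕ := fun g =>
    if h : g.Nonempty ∧ ∀ f ∈ g, P.AdequateSeq f then
      Finset.univ.sup (fun j : Fin (b ⟨g, h⟩).1 => (b ⟨g, h⟩).2.2 j)
    else 0
  let k : ℕ := 1 + F.1.powerset.sup Nf
  have hk : ∀ G : GT P, G.1 ⊂ F.1 → ∀ i, (b G).2.2 i < k := by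
    intro G hG i
    have h1 : (b G).2.2 i ≤ Nf G.1 := by
      have hdef : Nf G.1
          = Finset.univ.sup (fun j : Fin (b ⟨G.1, G.2⟩).1 => (b ⟨G.1, G.2⟩).2.2 j) :=
        dif_pos G.2
      rw [hdef]
      exact Finset.le_sup (Finset.mem_univ i)
    have h2 : Nf G.1 ≤ F.1.powerset.sup Nf :=
      Finset.le_sup (Finset.mem_powerset.mpr hG.subset)
    omega
  -- apply the J-set property to the shifted sequences
  obtain ⟨m, hm0, a, t, ht, hprod⟩ := hrJ _ hA (F.1.image (fun f => fun n => f (n + k)))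
    (F.2.1.image _)
    (by
      intro f hf
      obtain ⟨g, hg, rfl⟩ := Finset.mem_image.mp hf
      exact shift_adequate P k g (F.2.2 g hg))
    {s₀} ⟨s₀, Finset.mem_singleton_self s₀⟩
  refine ⟨⟨m, a, fun i => t i + k⟩, ?_, ?_, ?_⟩
  · intro i j hij
    exact Nat.add_lt_add_right (ht hij) k
  · intro G hG i j
    have h1 := hk G hG i
    show (b G).2.2 i < t j + k
    omega
  · intro f hf
    obtain ⟨v, hv1, hv2⟩ := hprod (fun n => f (n + k)) (Finset.mem_image_of_mem _ hf)
    exact ⟨v, hv1, hv2.1⟩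

lemma bld_spec (P : PartialSemigroup S) (r : Ultrafilter S) (C : ℕ → Set S)
    (hC : ∀ n, C n ∈ r)
    (hidem : ∀ A : Set S, A ∈ r ↔ {a : S | P.invImg a A ∈ r} ∈ r)
    (hrJ : ∀ A : Set S, A ∈ r → P.IsJSet A)
    (s₀ : S) :
    ∀ F : GT P, LocalSpec P r C (bld P r C s₀) F (bld P r C s₀ F) := by
  have main : ∀ n : ℕ, ∀ F : GT P, F.1.card ≤ n →
      LocalSpec P r C (bld P r C s₀) F (bld P r C s₀ F) := by
    intro n
    induction n with
    | zero =>
      intro F hF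
      exact absurd (Finset.card_pos.mpr F.2.1) (by omega)
    | succ n IHn =>
      intro F hF
      have IH : ∀ G : GT P, G.1.card < F.1.card →
          LocalSpec P r C (bld P r C s₀) G (bld P r C s₀ G) :=
        fun G hG => IHn G (by omega)
      obtain ⟨d, hd⟩ := exists_spec P r C hC hidem hrJ s₀ F IH
      have hext : ∀ G : GT P, G.1 ⊂ F.1 →
          ext s₀ F (fun G _ => bld P r C s₀ G) G = bld P r C s₀ G :=
        fun G hG => dif_pos (Finset.card_lt_card hG)
      have hd' : LocalSpec P r C (ext s₀ F (fun G _ => bld P r C s₀ G)) F d :=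
        localSpec_congr (fun G hG => (hext G hG).symm) hd
      have hex : ∃ d, LocalSpec P r C (ext s₀ F (fun G _ => bld P r C s₀ G)) F d := ⟨d, hd'⟩
      have hval : bld P r C s₀ F = hex.choose := by
        rw [bld_eq]
        unfold bldStep
        rw [dif_pos hex]
      rw [hval]
      exact localSpec_congr hext hex.choose_spec
  intro F
  exact main F.1.card F le_rfl

end CSTAux

open PartialSemigroup in
/-- Phulara-type central sets theorem for adequate partial semigroups. -/
theorem stmt12 {S : Type*} (P : PartialSemigroup S) (hP : P.Adequate)
    -- `r` is an idempotent in `J(S) ⊆ δS`: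
    (r : Ultrafilter S) (hrδ : P.mem_delta r)
    (hrJ : ∀ A : Set S, A ∈ r → P.IsJSet A)
    (hidem : ∀ A : Set S, A ∈ r ↔ {a : S | P.invImg a A ∈ r} ∈ r)
    (C : ℕ → Set S) (hC : ∀ n, C n ∈ r) :
    ∃ mstar : {G : Finset (ℕ → S) // G.Nonempty ∧ ∀ f ∈ G, P.AdequateSeq f} → ℕ,
    ∃ α : ∀ G : {G : Finset (ℕ → S) // G.Nonempty ∧ ∀ f ∈ G, P.AdequateSeq f},
        Fin (mstar G + 1) → S,
    ∃ T : ∀ G : {G : Finset (ℕ → S) // G.Nonempty ∧ ∀ f ∈ G, P.AdequateSeq f},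
        Fin (mstar G) → ℕ,
      (∀ G, StrictMono (T G)) ∧
      -- (1): if G ⊊ F then max T(G) < min T(F)
      (∀ F G, G.1 ⊂ F.1 → ∀ i j, T G i < T F j) ∧
      -- (2): products along increasing chains with |G₁| = m land in C m
      (∀ (s : ℕ) (G : Fin (s + 1) → {G : Finset (ℕ → S) // G.Nonempty ∧
            ∀ f ∈ G, P.AdequateSeq f})
          (f : Fin (s + 1) → ℕ → S),
        (∀ i j : Fin (s + 1), i < j → (G i).1 ⊂ (G j).1) →
        (∀ i, f i ∈ (G i).1) →
        ∃ v, P.optProd ((List.finRange (s + 1)).map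
              (fun i => P.jProd (α (G i)) (T (G i)) (f i))) = some v ∧
          v ∈ C ((G 0).1.card)) := by
  classical
  have hS : Nonempty S := Filter.nonempty_of_neBot (r : Filter S)
  obtain ⟨s₀⟩ := hS
  have hspec := CSTAux.bld_spec P r C hC hidem hrJ s₀
  refine ⟨fun G => (CSTAux.bld P r C s₀ G).1, fun G => (CSTAux.bld P r C s₀ G).2.1,
    fun G => (CSTAux.bld P r C s₀ G).2.2, ?_, ?_, ?_⟩
  · intro G
    exact (hspec G).1
  · intro F G h i j
    exact (hspec F).2.1 G h i j
  · intro s G f hinc hf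
    obtain ⟨x, hx, hxs⟩ := CSTAux.chain_prod_good P r C (CSTAux.bld P r C s₀) s G f
      (fun i => hspec (G i)) hinc hf
    exact ⟨x, hx, CSTAux.star_subset P r _ hxs⟩
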